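/- Let k ≥ 2 and let E = Λ^•(ℂ^k) with the fermionic creation operators a_i (wedge with e_i) and annihilation operators a_i^* (contraction by ε_i). Then: (1) the linear span L of the operators {a_i a_j, a_i^* a_j^*, a_i a_j^* − (1/2)δ_{ij}·id : 1 ≤ i, j ≤ k} is a Lie subalgebra of End(E) (under commutators) of dimension 2k² − k, isomorphic as a Lie algebra to so(2k,ℂ); (2) the even part Λ^{even}(ℂ^k) of E is invariant under L and is an irreducible L-module (the half-spin representation); (3) setting X_i^+ := a_{i+1} a_i^* and X_i^- := a_i a_{i+1}^* for 1 ≤ i ≤ k−1, X_k^+ := a_k^* a_{k−1}^* and X_k^- := a_{k−1} a_k, and H_i := [X_i^+, X_i^-], the element 1 ∈ Λ^0 satisfies X_i^+(1) = 0 for all i, H_i(1) = 0 for i < k, and H_k(1) = 1; that is, 1 is a highest weight vector of the k-th fundamental weight, so the spinor representation of so(2k,ℂ) is the k-th fundamental representation. -/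

import Mathlib

/- Concrete model of the exterior algebra Λ^•(W) for W = ℂ^{2n}:
   an element is a coordinate function on the basis {χ_S}, S ⊆ {1,…,2n}. -/

open scoped Classical
open Matrix

noncomputable section

attribute [local instance 100] LieRing.ofAssociativeRing

/-- Model of Λ^•(ℂ^N): coordinates with respect to the basis of wedge monomials. -/
abbrev Fock (N : ℕ) := Finset (Fin N) → ℂ

/-- The Koszul sign (−1)^{#{j ∈ S : j < i}}. -/
def sgn {N : ℕ} (i : Fin N) (S : Finset (Fin N)) : ℂ :=
  (-1) ^ (S.filter (fun j => j < i)).card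

/-- Generic "matrix-element" operator used to define creation/annihilation. -/
def fockOp {N : ℕ} (c : Finset (Fin N) → ℂ) (g : Finset (Fin N) → Finset (Fin N)) :
    Module.End ℂ (Fock N) where
  toFun f := fun S => c S * f (g S)
  map_add' f₁ f₂ := by funext S; simp [Pi.add_apply, mul_add]
  map_smul' r f := by funext S; simp [Pi.smul_apply, smul_eq_mul]; ring

/-- Left exterior multiplication by the basis vector indexed by `i`. -/
def wedgeOp {N : ℕ} (i : Fin N) : Module.End ℂ (Fock N) :=
  fockOp (fun S => if i ∈ S then sgn i S else 0) (fun S => S.erase i)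

/-- Contraction (interior product) by the dual basis vector indexed by `i`. -/
def contrOp {N : ℕ} (i : Fin N) : Module.End ℂ (Fock N) :=
  fockOp (fun S => if i ∈ S then 0 else sgn i S) (fun S => insert i S)

/-- The homogeneous component Λ^i(ℂ^N). -/
def degSub (N i : ℕ) : Submodule ℂ (Fock N) where
  carrier := {f | ∀ S : Finset (Fin N), S.card ≠ i → f S = 0}
  add_mem' := by intro f g hf hg S hS; simp [Pi.add_apply, hf S hS, hg S hS]
  zero_mem' := by intro S hS; rfl
  smul_mem' := by intro c f hf S hS; simp [Pi.smul_apply, hf S hS]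

/-- The even part Λ^{even}(ℂ^N). -/
def evenSub (N : ℕ) : Submodule ℂ (Fock N) where
  carrier := {f | ∀ S : Finset (Fin N), ¬ Even S.card → f S = 0}
  add_mem' := by intro f g hf hg S hS; simp [Pi.add_apply, hf S hS, hg S hS]
  zero_mem' := by intro S hS; rfl
  smul_mem' := by intro c f hf S hS; simp [Pi.smul_apply, hf S hS]

/-- The vacuum vector 1 ∈ Λ⁰. -/
def vac (N : ℕ) : Fock N := fun S => if S = ∅ then 1 else 0

/-- The generating set {a_i a_j, a_i^* a_j^*, a_i a_j^* − (1/2)δ_{ij}·id}. -/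
def soOps (k : ℕ) : Set (Module.End ℂ (Fock k)) :=
  {T | (∃ i j : Fin k, T = wedgeOp i * wedgeOp j) ∨
       (∃ i j : Fin k, T = contrOp i * contrOp j) ∨
       (∃ i j : Fin k, T = wedgeOp i * contrOp j -
          (if i = j then ((1 : ℂ)/2) • (1 : Module.End ℂ (Fock k)) else 0))}

section Signs
variable {N : ℕ}

lemma sgn_sq (i : Fin N) (S : Finset (Fin N)) : sgn i S * sgn i S = 1 := by
  unfold sgn
  rw [← pow_add]
  exact Even.neg_one_pow ⟨_, rfl⟩

lemma sgn_ne_zero (i : Fin N) (S : Finset (Fin N)) : sgn i S ≠ 0 := by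
  intro h
  have := sgn_sq i S
  rw [h, mul_zero] at this
  exact one_ne_zero this.symm

lemma sgn_insert_self (i : Fin N) (S : Finset (Fin N)) : sgn i (insert i S) = sgn i S := by
  unfold sgn
  congr 2
  ext j
  simp only [Finset.mem_filter, Finset.mem_insert]
  constructor
  · rintro ⟨h1 | h1, h2⟩
    · exact absurd h2 (by simp [h1])
    · exact ⟨h1, h2⟩
  · rintro ⟨h1, h2⟩; exact ⟨Or.inr h1, h2⟩

lemma sgn_erase_self (i : Fin N) (S : Finset (Fin N)) : sgn i (S.erase i) = sgn i S := by
  unfold sgn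
  congr 2
  ext j
  simp only [Finset.mem_filter, Finset.mem_erase]
  constructor
  · rintro ⟨⟨_, h1⟩, h2⟩; exact ⟨h1, h2⟩
  · rintro ⟨h1, h2⟩; exact ⟨⟨fun hji => by simp [hji] at h2, h1⟩, h2⟩

lemma sgn_insert {i j : Fin N} (S : Finset (Fin N)) (hij : i ≠ j) (hj : j ∉ S) :
    sgn i (insert j S) = (if j < i then -1 else 1) * sgn i S := by
  unfold sgn
  rw [Finset.filter_insert]
  by_cases hji : j < i
  · rw [if_pos hji, if_pos hji,
      Finset.card_insert_of_notMem (fun hmem => hj (Finset.mem_filter.1 hmem).1)]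
    rw [pow_succ, mul_comm]
  · rw [if_neg hji, if_neg hji, one_mul]

lemma sgn_erase {i j : Fin N} (S : Finset (Fin N)) (hij : i ≠ j) (hj : j ∈ S) :
    sgn i (S.erase j) = (if j < i then -1 else 1) * sgn i S := by
  have h := sgn_insert (S.erase j) hij (Finset.notMem_erase j S)
  rw [Finset.insert_erase hj] at h
  rw [h]
  by_cases hji : j < i
  · simp [hji]
  · simp [hji]

end Signs

section ApplyLemmas
variable {N : ℕ}

lemma wedge_apply (i : Fin N) (f : Fock N) (S : Finset (Fin N)) :
    wedgeOp i f S = (if i ∈ S then sgn i S else 0) * f (S.erase i) := rfl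

lemma contr_apply (i : Fin N) (f : Fock N) (S : Finset (Fin N)) :
    contrOp i f S = (if i ∈ S then 0 else sgn i S) * f (insert i S) := rfl

/-- delta function basis vector -/
def deltaF (S : Finset (Fin N)) : Fock N := fun T => if T = S then 1 else 0

lemma vac_eq_deltaF : vac N = deltaF ∅ := rfl

lemma wedge_deltaF_not_mem {i : Fin N} {S : Finset (Fin N)} (h : i ∉ S) :
    wedgeOp i (deltaF S) = sgn i S • deltaF (insert i S) := by
  funext T
  rw [wedge_apply]
  simp only [Pi.smul_apply, deltaF, smul_eq_mul]
  by_cases hiT : i ∈ T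
  · rw [if_pos hiT]
    by_cases hTe : T.erase i = S
    · have hT : T = insert i S := by rw [← hTe, Finset.insert_erase hiT]
      rw [if_pos hTe, if_pos hT, hT, sgn_insert_self]
    · have hT : T ≠ insert i S := by
        intro hT; apply hTe; rw [hT, Finset.erase_insert h]
      rw [if_neg hTe, if_neg hT, mul_zero, mul_zero]
  · rw [if_neg hiT, zero_mul]
    have : T ≠ insert i S := by intro hT; apply hiT; rw [hT]; exact Finset.mem_insert_self i S
    rw [if_neg this, mul_zero]

lemma wedge_deltaF_mem {i : Fin N} {S : Finset (Fin N)} (h : i ∈ S) :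
    wedgeOp i (deltaF S) = 0 := by
  funext T
  rw [wedge_apply]
  simp only [Pi.zero_apply, deltaF]
  by_cases hiT : i ∈ T
  · have : T.erase i ≠ S := by
      intro hTe; apply Finset.notMem_erase i T; rw [hTe]; exact h
    rw [if_neg this, mul_zero]
  · rw [if_neg hiT, zero_mul]

lemma contr_deltaF_mem {i : Fin N} {S : Finset (Fin N)} (h : i ∈ S) :
    contrOp i (deltaF S) = sgn i S • deltaF (S.erase i) := by
  funext T
  rw [contr_apply]
  simp only [Pi.smul_apply, deltaF, smul_eq_mul]
  by_cases hiT : i ∈ T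
  · rw [if_pos hiT, zero_mul]
    have : T ≠ S.erase i := by
      intro hT; rw [hT] at hiT; exact Finset.notMem_erase i S hiT
    rw [if_neg this, mul_zero]
  · rw [if_neg hiT]
    by_cases hT : insert i T = S
    · have hTe : T = S.erase i := by rw [← hT, Finset.erase_insert hiT]
      rw [if_pos hT, if_pos hTe, mul_one, hTe, sgn_erase_self, mul_one]
    · have hTe : T ≠ S.erase i := by
        intro h'; apply hT; rw [h', Finset.insert_erase h]
      rw [if_neg hT, if_neg hTe, mul_zero, mul_zero]

lemma contr_deltaF_not_mem {i : Fin N} {S : Finset (Fin N)} (h : i ∉ S) :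
    contrOp i (deltaF S) = 0 := by
  funext T
  rw [contr_apply]
  simp only [Pi.zero_apply, deltaF]
  by_cases hiT : i ∈ T
  · rw [if_pos hiT, zero_mul]
  · have : insert i T ≠ S := by
      intro hT; apply h; rw [← hT]; exact Finset.mem_insert_self i T
    rw [if_neg this, mul_zero]

end ApplyLemmas

section CAR
variable {N : ℕ}

lemma end_ext_iff {T U : Module.End ℂ (Fock N)} :
    T = U ↔ ∀ (f : Fock N) (S : Finset (Fin N)), T f S = U f S := by
  constructor
  · rintro rfl f S; rfl
  · intro h; apply LinearMap.ext; intro f; funext S; exact h f S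

lemma car_ww (i j : Fin N) : wedgeOp i * wedgeOp j + wedgeOp j * wedgeOp i = 0 := by
  rw [end_ext_iff]
  intro f S
  simp only [LinearMap.add_apply, Pi.add_apply, Module.End.mul_apply, LinearMap.zero_apply,
    Pi.zero_apply, wedge_apply]
  by_cases hij : i = j
  · subst hij
    simp [Finset.notMem_erase]
  by_cases hi : i ∈ S
  · by_cases hj : j ∈ S
    · rw [if_pos hi, if_pos hj, if_pos (Finset.mem_erase.2 ⟨hij, hi⟩),
        if_pos (Finset.mem_erase.2 ⟨Ne.symm hij, hj⟩)]
      rw [Finset.erase_right_comm (a := i) (b := j)]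
      rw [sgn_erase (S := S) (Ne.symm hij) hi, sgn_erase (S := S) hij hj]
      rcases lt_or_gt_of_ne (show i ≠ j from hij) with h | h
      · rw [if_pos h, if_neg (asymm h)]; ring
      · rw [if_neg (asymm h), if_pos h]; ring
    · rw [if_neg hj, if_neg (fun h => hj (Finset.mem_of_mem_erase h))]
      ring
  · rw [if_neg hi, if_neg (fun h => hi (Finset.mem_of_mem_erase h))]
    ring

lemma car_cc (i j : Fin N) : contrOp i * contrOp j + contrOp j * contrOp i = 0 := by
  rw [end_ext_iff]
  intro f S
  simp only [LinearMap.add_apply, Pi.add_apply, Module.End.mul_apply, LinearMap.zero_apply,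
    Pi.zero_apply, contr_apply]
  by_cases hij : i = j
  · subst hij
    simp [Finset.mem_insert_self]
  by_cases hi : i ∈ S
  · rw [if_pos hi, if_pos (Finset.mem_insert_of_mem hi)]
    ring
  · by_cases hj : j ∈ S
    · rw [if_pos hj, if_pos (Finset.mem_insert_of_mem hj)]
      ring
    · rw [if_neg hi, if_neg hj,
        if_neg (by simp [Finset.mem_insert, hj, Ne.symm hij]),
        if_neg (by simp [Finset.mem_insert, hi, hij])]
      rw [Finset.insert_comm]
      rw [sgn_insert (S := S) (Ne.symm hij) hi, sgn_insert (S := S) hij hj]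
      rcases lt_or_gt_of_ne (show i ≠ j from hij) with h | h
      · rw [if_pos h, if_neg (asymm h)]; ring
      · rw [if_neg (asymm h), if_pos h]; ring

lemma car_wc (i j : Fin N) : wedgeOp i * contrOp j + contrOp j * wedgeOp i
    = (if i = j then (1:ℂ) else 0) • 1 := by
  rw [end_ext_iff]
  intro f S
  simp only [LinearMap.add_apply, Pi.add_apply, Module.End.mul_apply, LinearMap.smul_apply,
    Pi.smul_apply, Module.End.one_apply, smul_eq_mul, wedge_apply, contr_apply]
  by_cases hij : i = j
  · subst hij
    rw [if_pos rfl, one_mul]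
    by_cases hi : i ∈ S
    · rw [if_pos hi, if_neg (Finset.notMem_erase i S), if_pos hi,
        Finset.insert_erase hi, sgn_erase_self, zero_mul, add_zero,
        ← mul_assoc, sgn_sq, one_mul]
    · rw [if_neg hi, if_neg hi, if_pos (Finset.mem_insert_self i S),
        Finset.erase_insert hi, sgn_insert_self, zero_mul, zero_add,
        ← mul_assoc, sgn_sq, one_mul]
  · rw [if_neg hij, zero_mul]
    by_cases hi : i ∈ S
    · by_cases hj : j ∈ S
      · rw [if_pos (Finset.mem_erase.2 ⟨Ne.symm hij, hj⟩), if_pos hj]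
        ring
      · rw [if_pos hi, if_neg hj,
          if_neg (by simp [Finset.mem_erase, Ne.symm hij, hj]),
          if_pos (Finset.mem_insert_of_mem hi),
          Finset.erase_insert_of_ne (Ne.symm hij),
          sgn_erase (i := j) (j := i) S (Ne.symm hij) hi,
          sgn_insert (i := i) (j := j) S hij hj]
        rcases lt_or_gt_of_ne (show i ≠ j from hij) with h | h
        · rw [if_pos h, if_neg (asymm h)]; ring
        · rw [if_neg (asymm h), if_pos h]; ring
    · rw [if_neg hi,
        if_neg (show ¬ i ∈ insert j S by simp [Finset.mem_insert, hi, hij])]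
      ring

end CAR

section Quad

abbrev Idx (k : ℕ) := Fin k ⊕ Fin k

variable {k : ℕ}

/-- the CAR generators -/
def cgen : Idx k → Module.End ℂ (Fock k) := Sum.elim wedgeOp contrOp

/-- the bilinear form matrix -/
def Jmat (k : ℕ) : Matrix (Idx k) (Idx k) ℂ := LieAlgebra.Orthogonal.JD (Fin k) ℂ

lemma Jmat_transpose : (Jmat k)ᵀ = Jmat k := by
  simp [Jmat, LieAlgebra.Orthogonal.JD, Matrix.fromBlocks_transpose]

lemma Jmat_sq : Jmat k * Jmat k = 1 := by
  simp [Jmat, LieAlgebra.Orthogonal.JD, Matrix.fromBlocks_multiply, ← Matrix.fromBlocks_one]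

lemma acar (p q : Idx k) :
    cgen p * cgen q + cgen q * cgen p = Jmat k p q • 1 := by
  rcases p with i | i <;> rcases q with j | j <;>
    simp only [cgen, Sum.elim_inl, Sum.elim_inr, Jmat, LieAlgebra.Orthogonal.JD,
      Matrix.fromBlocks_apply₁₁, Matrix.fromBlocks_apply₁₂, Matrix.fromBlocks_apply₂₁,
      Matrix.fromBlocks_apply₂₂, Matrix.zero_apply, Matrix.one_apply]
  · rw [car_ww, zero_smul]
  · rw [car_wc]
  · rw [add_comm, car_wc]
    by_cases h : i = j
    · subst h; simp
    · simp [h, Ne.symm h]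
  · rw [car_cc, zero_smul]

/-- quadratic expression in the CAR generators -/
def quadOp (M : Matrix (Idx k) (Idx k) ℂ) : Module.End ℂ (Fock k) :=
  ∑ p, ∑ q, M p q • (cgen p * cgen q)

lemma quadOp_sub (M N : Matrix (Idx k) (Idx k) ℂ) :
    quadOp (M - N) = quadOp M - quadOp N := by
  unfold quadOp
  rw [← Finset.sum_sub_distrib]
  refine Finset.sum_congr rfl fun p _ => ?_
  rw [← Finset.sum_sub_distrib]
  refine Finset.sum_congr rfl fun q _ => ?_
  rw [Matrix.sub_apply]
  module

lemma quadOp_add (M N : Matrix (Idx k) (Idx k) ℂ) :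
    quadOp (M + N) = quadOp M + quadOp N := by
  unfold quadOp
  rw [← Finset.sum_add_distrib]
  refine Finset.sum_congr rfl fun p _ => ?_
  rw [← Finset.sum_add_distrib]
  refine Finset.sum_congr rfl fun q _ => ?_
  rw [Matrix.add_apply]
  module

lemma quadOp_smul (c : ℂ) (M : Matrix (Idx k) (Idx k) ℂ) :
    quadOp (c • M) = c • quadOp M := by
  unfold quadOp
  rw [Finset.smul_sum]
  refine Finset.sum_congr rfl fun p _ => ?_
  rw [Finset.smul_sum]
  refine Finset.sum_congr rfl fun q _ => ?_
  rw [Matrix.smul_apply, smul_eq_mul, mul_smul]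

lemma transpose_entry {M : Matrix (Idx k) (Idx k) ℂ} (hM : Mᵀ = -M) (p q : Idx k) :
    M p q = - M q p := by
  have := congrFun (congrFun hM q) p
  simpa [Matrix.transpose_apply] using this

lemma quad_comm_c {M : Matrix (Idx k) (Idx k) ℂ} (hM : Mᵀ = -M) (r : Idx k) :
    quadOp M * cgen r - cgen r * quadOp M
      = ∑ p, ((2:ℂ) * (M * Jmat k) p r) • cgen p := by
  have key : ∀ p q : Idx k, (cgen p * cgen q) * cgen r - cgen r * (cgen p * cgen q)
      = Jmat k q r • cgen p - Jmat k p r • cgen q := by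
    intro p q
    have h1 : cgen q * cgen r + cgen r * cgen q = Jmat k q r • 1 := acar q r
    have h2 : cgen p * cgen r + cgen r * cgen p = Jmat k p r • 1 := acar p r
    have h3 : (cgen p * cgen q) * cgen r - cgen r * (cgen p * cgen q)
        = cgen p * (cgen q * cgen r + cgen r * cgen q)
          - (cgen p * cgen r + cgen r * cgen p) * cgen q := by noncomm_ring
    rw [h3, h1, h2, mul_smul_comm, smul_mul_assoc, mul_one, one_mul]
  calc quadOp M * cgen r - cgen r * quadOp M
      = ∑ p, ∑ q, M p q • ((cgen p * cgen q) * cgen r - cgen r * (cgen p * cgen q)) := by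
        rw [quadOp, Finset.sum_mul, Finset.mul_sum, ← Finset.sum_sub_distrib]
        refine Finset.sum_congr rfl fun p _ => ?_
        rw [Finset.sum_mul, Finset.mul_sum, ← Finset.sum_sub_distrib]
        refine Finset.sum_congr rfl fun q _ => ?_
        rw [smul_mul_assoc, mul_smul_comm, smul_sub]
    _ = (∑ p, ∑ q, (M p q * Jmat k q r) • cgen p) - ∑ p, ∑ q, (M p q * Jmat k p r) • cgen q := by
        simp_rw [key, smul_sub, smul_smul, Finset.sum_sub_distrib]
    _ = (∑ p, (M * Jmat k) p r • cgen p) - ∑ q, (- ((M * Jmat k) q r)) • cgen q := by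
        congr 1
        · refine Finset.sum_congr rfl fun p _ => ?_
          rw [← Finset.sum_smul, ← Matrix.mul_apply]
        · rw [Finset.sum_comm]
          refine Finset.sum_congr rfl fun q _ => ?_
          rw [← Finset.sum_smul]
          congr 1
          rw [Matrix.mul_apply, ← Finset.sum_neg_distrib]
          refine Finset.sum_congr rfl fun p _ => ?_
          rw [transpose_entry hM p q]
          ring
    _ = ∑ p, ((2:ℂ) * (M * Jmat k) p r) • cgen p := by
        rw [← Finset.sum_sub_distrib]
        refine Finset.sum_congr rfl fun p _ => ?_
        module

lemma mul_comm_aux (a b X : Module.End ℂ (Fock k)) :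
    X * (a * b) - (a * b) * X = (X * a - a * X) * b + a * (X * b - b * X) := by
  rw [sub_mul, mul_sub, mul_assoc a X b, mul_assoc a b X, ← mul_assoc X a b]
  abel

lemma triple_swap {α : Type*} [AddCommMonoid α] {ι : Type*} [Fintype ι]
    (w : ι → ι → ι → α) :
    ∑ a, ∑ b, ∑ m, w a b m = ∑ m, ∑ b, ∑ a, w a b m := by
  calc ∑ a, ∑ b, ∑ m, w a b m
      = ∑ b, ∑ a, ∑ m, w a b m := Finset.sum_comm
    _ = ∑ b, ∑ m, ∑ a, w a b m := Finset.sum_congr rfl fun b _ => Finset.sum_comm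
    _ = ∑ m, ∑ b, ∑ a, w a b m := Finset.sum_comm

lemma quad_comm {M N : Matrix (Idx k) (Idx k) ℂ} (hM : Mᵀ = -M) (hN : Nᵀ = -N) :
    quadOp M * quadOp N - quadOp N * quadOp M
      = quadOp ((2:ℂ) • (M * Jmat k * N - N * Jmat k * M)) := by
  set A := M * Jmat k with hA
  have hAT : Aᵀ = -(Jmat k * M) := by
    rw [hA, Matrix.transpose_mul, Jmat_transpose, hM, Matrix.mul_neg]
  have key : ∀ p q : Idx k, quadOp M * (cgen p * cgen q) - (cgen p * cgen q) * quadOp M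
      = (∑ r, ((2:ℂ) * A r p) • cgen r) * cgen q
        + cgen p * (∑ r, ((2:ℂ) * A r q) • cgen r) := by
    intro p q
    rw [← quad_comm_c hM p, ← quad_comm_c hM q]
    exact mul_comm_aux (cgen p) (cgen q) (quadOp M)
  calc quadOp M * quadOp N - quadOp N * quadOp M
      = ∑ p, ∑ q, N p q • (quadOp M * (cgen p * cgen q) - (cgen p * cgen q) * quadOp M) := by
        rw [(show quadOp N = ∑ p, ∑ q, N p q • (cgen p * cgen q) from rfl),
          Finset.sum_mul, Finset.mul_sum, ← Finset.sum_sub_distrib]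
        refine Finset.sum_congr rfl fun p _ => ?_
        rw [Finset.sum_mul, Finset.mul_sum, ← Finset.sum_sub_distrib]
        refine Finset.sum_congr rfl fun q _ => ?_
        rw [smul_mul_assoc, mul_smul_comm, smul_sub]
    _ = ∑ p, ∑ q, ((∑ r, (((2:ℂ) * A r p) * N p q) • (cgen r * cgen q))
          + ∑ r, ((N p q * ((2:ℂ) * A r q)) • (cgen p * cgen r))) := by
        refine Finset.sum_congr rfl fun p _ => ?_
        refine Finset.sum_congr rfl fun q _ => ?_
        rw [key p q, smul_add]
        congr 1
        · rw [Finset.sum_mul, Finset.smul_sum]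
          refine Finset.sum_congr rfl fun r _ => ?_
          rw [smul_mul_assoc, smul_smul, mul_comm (N p q)]
        · rw [Finset.mul_sum, Finset.smul_sum]
          refine Finset.sum_congr rfl fun r _ => ?_
          rw [mul_smul_comm, smul_smul]
    _ = (∑ p, ∑ q, ∑ r, (((2:ℂ) * A r p) * N p q) • (cgen r * cgen q))
          + ∑ p, ∑ q, ∑ r, ((N p q * ((2:ℂ) * A r q)) • (cgen p * cgen r)) := by
        rw [← Finset.sum_add_distrib]
        refine Finset.sum_congr rfl fun p _ => ?_
        rw [← Finset.sum_add_distrib]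
    _ = quadOp (((2:ℂ) • A) * N) + quadOp (N * (((2:ℂ) • A)ᵀ)) := by
        congr 1
        · have hw : quadOp (((2:ℂ) • A) * N)
              = ∑ a, ∑ b, ∑ m, ((2:ℂ) * A a m * N m b) • (cgen a * cgen b) := by
            refine Finset.sum_congr rfl fun a _ => Finset.sum_congr rfl fun b _ => ?_
            rw [Matrix.mul_apply, Finset.sum_smul]
            refine Finset.sum_congr rfl fun m _ => ?_
            rw [Matrix.smul_apply, smul_eq_mul]
          rw [hw, triple_swap (fun a b m => ((2:ℂ) * A a m * N m b) • (cgen a * cgen b))]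
        · have hw2 : quadOp (N * (((2:ℂ) • A)ᵀ))
              = ∑ p, ∑ r, ∑ q, (N p q * ((2:ℂ) * A r q)) • (cgen p * cgen r) := by
            refine Finset.sum_congr rfl fun p _ => Finset.sum_congr rfl fun r _ => ?_
            rw [Matrix.mul_apply, Finset.sum_smul]
            refine Finset.sum_congr rfl fun q _ => ?_
            rw [Matrix.transpose_apply, Matrix.smul_apply, smul_eq_mul]
          rw [hw2]
          refine Finset.sum_congr rfl fun p _ => Finset.sum_comm
    _ = quadOp ((2:ℂ) • (M * Jmat k * N - N * Jmat k * M)) := by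
        have h1 : ((2:ℂ) • A) * N = (2:ℂ) • (M * Jmat k * N) := by
          rw [Matrix.smul_mul, hA]
        have h2 : N * (((2:ℂ) • A)ᵀ) = -((2:ℂ) • (N * Jmat k * M)) := by
          rw [Matrix.transpose_smul, hAT, smul_neg, Matrix.mul_neg, Matrix.mul_smul,
            Matrix.mul_assoc]
        have h0 : quadOp (k := k) 0 = 0 := by
          unfold quadOp
          refine Finset.sum_eq_zero fun p _ => Finset.sum_eq_zero fun q _ => ?_
          rw [Matrix.zero_apply, zero_smul]
        have h3 : quadOp (-((2:ℂ) • (N * Jmat k * M))) = - quadOp ((2:ℂ) • (N * Jmat k * M)) := by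
          have := quadOp_sub (0 : Matrix (Idx k) (Idx k) ℂ) ((2:ℂ) • (N * Jmat k * M))
          rw [zero_sub, h0, zero_sub] at this
          exact this
        rw [h1, h2, smul_sub, quadOp_sub, h3]
        abel

end Quad

section Phi
variable {k : ℕ}

lemma Jmat_ll (i j : Fin k) : Jmat k (Sum.inl i) (Sum.inl j) = 0 := by
  simp [Jmat, LieAlgebra.Orthogonal.JD]
lemma Jmat_lr (i j : Fin k) : Jmat k (Sum.inl i) (Sum.inr j) = if i = j then 1 else 0 := by
  simp [Jmat, LieAlgebra.Orthogonal.JD, Matrix.one_apply]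
lemma Jmat_rl (i j : Fin k) : Jmat k (Sum.inr i) (Sum.inl j) = if i = j then 1 else 0 := by
  simp [Jmat, LieAlgebra.Orthogonal.JD, Matrix.one_apply]
lemma Jmat_rr (i j : Fin k) : Jmat k (Sum.inr i) (Sum.inr j) = 0 := by
  simp [Jmat, LieAlgebra.Orthogonal.JD]

/-- type D lie algebra on our index set -/
abbrev typeDk (k : ℕ) : LieSubalgebra ℂ (Matrix (Idx k) (Idx k) ℂ) :=
  LieAlgebra.Orthogonal.typeD (Fin k) ℂ

lemma mem_typeDk_iff (A : Matrix (Idx k) (Idx k) ℂ) :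
    A ∈ typeDk k ↔ Aᵀ * Jmat k = Jmat k * (-A) := by
  show A ∈ skewAdjointMatricesLieSubalgebra (LieAlgebra.Orthogonal.JD (Fin k) ℂ) ↔ _
  rw [mem_skewAdjointMatricesLieSubalgebra, mem_skewAdjointMatricesSubmodule]
  rfl

lemma skew_JA {A : Matrix (Idx k) (Idx k) ℂ} (hA : A ∈ typeDk k) :
    (Jmat k * A)ᵀ = -(Jmat k * A) := by
  rw [mem_typeDk_iff] at hA
  rw [Matrix.transpose_mul, Jmat_transpose, hA, Matrix.mul_neg]

/-- The spin representation homomorphism. -/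
def PhiHom (k : ℕ) : typeDk k →ₗ⁅ℂ⁆ Module.End ℂ (Fock k) where
  toFun A := (2⁻¹ : ℂ) • quadOp (Jmat k * A.val)
  map_add' A B := by
    have h : ((A + B : typeDk k) : Matrix (Idx k) (Idx k) ℂ) = A.val + B.val := rfl
    show (2⁻¹ : ℂ) • quadOp (Jmat k * ((A + B : typeDk k) : Matrix (Idx k) (Idx k) ℂ)) = _
    rw [h, Matrix.mul_add, quadOp_add, smul_add]
  map_smul' c A := by
    have h : ((c • A : typeDk k) : Matrix (Idx k) (Idx k) ℂ) = c • A.val := rfl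
    simp only [RingHom.id_apply]
    show (2⁻¹ : ℂ) • quadOp (Jmat k * ((c • A : typeDk k) : Matrix (Idx k) (Idx k) ℂ))
        = c • ((2⁻¹ : ℂ) • quadOp (Jmat k * A.val))
    rw [h, Matrix.mul_smul, quadOp_smul, smul_comm]
  map_lie' := by
    intro A B
    show (2⁻¹ : ℂ) • quadOp (Jmat k * (⁅A, B⁆ : typeDk k).val)
        = ⁅(2⁻¹ : ℂ) • quadOp (Jmat k * A.val), (2⁻¹ : ℂ) • quadOp (Jmat k * B.val)⁆
    set M := Jmat k * A.val with hM
    set N := Jmat k * B.val with hN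
    have hMs : Mᵀ = -M := skew_JA A.2
    have hNs : Nᵀ = -N := skew_JA B.2
    have h1 : M * Jmat k * N = Jmat k * (A.val * B.val) := by
      rw [hM, hN, Matrix.mul_assoc (Jmat k * A.val) (Jmat k) (Jmat k * B.val),
        ← Matrix.mul_assoc (Jmat k) (Jmat k) B.val, Jmat_sq, Matrix.one_mul,
        Matrix.mul_assoc]
    have h2 : N * Jmat k * M = Jmat k * (B.val * A.val) := by
      rw [hM, hN, Matrix.mul_assoc (Jmat k * B.val) (Jmat k) (Jmat k * A.val),
        ← Matrix.mul_assoc (Jmat k) (Jmat k) A.val, Jmat_sq, Matrix.one_mul,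
        Matrix.mul_assoc]
    have hbr : (⁅A, B⁆ : typeDk k).val = A.val * B.val - B.val * A.val := by
      rw [LieSubalgebra.coe_bracket, LieRing.of_associative_ring_bracket]
    calc (2⁻¹ : ℂ) • quadOp (Jmat k * (⁅A, B⁆ : typeDk k).val)
        = (2⁻¹ : ℂ) • quadOp (Jmat k * (A.val * B.val - B.val * A.val)) := by rw [hbr]
      _ = (2⁻¹ : ℂ) • ((2⁻¹ : ℂ) • quadOp ((2:ℂ) • (M * Jmat k * N - N * Jmat k * M))) := by
          rw [quadOp_smul, h1, h2, Matrix.mul_sub, smul_smul, smul_smul]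
          norm_num
      _ = ⁅(2⁻¹ : ℂ) • quadOp M, (2⁻¹ : ℂ) • quadOp N⁆ := by
          rw [LieRing.of_associative_ring_bracket, smul_mul_assoc, smul_mul_assoc,
            mul_smul_comm, mul_smul_comm]
          simp only [smul_smul]
          rw [← quad_comm hMs hNs, smul_sub]

lemma PhiHom_apply (A : typeDk k) :
    PhiHom k A = (2⁻¹ : ℂ) • quadOp (Jmat k * A.val) := rfl

/-- shifted quadratic generators -/
def dgen (p q : Idx k) : Module.End ℂ (Fock k) :=
  cgen p * cgen q - ((2⁻¹:ℂ) * Jmat k p q) • 1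

lemma Jmat_symm_entry (p q : Idx k) : Jmat k p q = Jmat k q p := by
  have := congrFun (congrFun (Jmat_transpose (k := k)) p) q
  simpa [Matrix.transpose_apply] using this.symm

lemma dgen_antisym (p q : Idx k) : dgen q p = - dgen p q := by
  unfold dgen
  have h : cgen q * cgen p = Jmat k p q • 1 - cgen p * cgen q := by
    rw [eq_sub_iff_add_eq, add_comm]
    exact acar p q
  rw [h, Jmat_symm_entry q p]
  module

lemma dgen_mem (p q : Idx k) : dgen p q ∈ Submodule.span ℂ (soOps k) := by
  rcases p with i | i <;> rcases q with j | j
  · refine Submodule.subset_span ?_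
    left
    refine ⟨i, j, ?_⟩
    unfold dgen
    rw [Jmat_ll]
    simp [cgen]
  · refine Submodule.subset_span ?_
    right; right
    refine ⟨i, j, ?_⟩
    unfold dgen
    rw [Jmat_lr]
    by_cases h : i = j
    · rw [if_pos h, if_pos h]
      simp [cgen]
      try norm_num
    · rw [if_neg h, if_neg h]
      simp [cgen]
  · rw [dgen_antisym]
    refine Submodule.neg_mem _ (Submodule.subset_span ?_)
    right; right
    refine ⟨j, i, ?_⟩
    unfold dgen
    rw [Jmat_lr]
    by_cases h : j = i
    · rw [if_pos h, if_pos h]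
      simp [cgen]
      try norm_num
    · rw [if_neg h, if_neg h]
      simp [cgen]
  · refine Submodule.subset_span ?_
    right; left
    refine ⟨i, j, ?_⟩
    unfold dgen
    rw [Jmat_rr]
    simp [cgen]

lemma quadOp_mem {M : Matrix (Idx k) (Idx k) ℂ} (hM : Mᵀ = -M) :
    quadOp M ∈ Submodule.span ℂ (soOps k) := by
  have flip : ∀ p q : Idx k, M p q * ((2⁻¹:ℂ) * Jmat k p q)
      = -(M q p * ((2⁻¹:ℂ) * Jmat k q p)) := by
    intro p q
    rw [transpose_entry hM p q, Jmat_symm_entry p q]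
    ring
  have ht : (∑ p, ∑ q, (M p q * ((2⁻¹:ℂ) * Jmat k p q))) = 0 := by
    set t := ∑ p, ∑ q, (M p q * ((2⁻¹:ℂ) * Jmat k p q)) with hdef
    have hsym : t = -t := by
      nth_rewrite 1 [hdef]
      rw [show (∑ p, ∑ q, (M p q * ((2⁻¹:ℂ) * Jmat k p q)))
          = ∑ p, ∑ q, -(M q p * ((2⁻¹:ℂ) * Jmat k q p)) from
        Finset.sum_congr rfl fun p _ => Finset.sum_congr rfl fun q _ => flip p q]
      simp only [Finset.sum_neg_distrib]
      congr 1
      rw [Finset.sum_comm]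
    have h2 : (2:ℂ) * t = 0 := by
      rw [two_mul]
      nth_rewrite 2 [hsym]
      ring
    exact (mul_eq_zero.1 h2).resolve_left two_ne_zero
  have expand : quadOp M = (∑ p, ∑ q, M p q • dgen p q)
      + (∑ p, ∑ q, (M p q * ((2⁻¹:ℂ) * Jmat k p q))) • 1 := by
    unfold quadOp
    rw [Finset.sum_smul, ← Finset.sum_add_distrib]
    refine Finset.sum_congr rfl fun p _ => ?_
    rw [Finset.sum_smul, ← Finset.sum_add_distrib]
    refine Finset.sum_congr rfl fun q _ => ?_
    unfold dgen
    module
  rw [expand, ht, zero_smul, add_zero]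
  refine Submodule.sum_mem _ fun p _ => Submodule.sum_mem _ fun q _ => ?_
  exact Submodule.smul_mem _ _ (dgen_mem p q)

lemma quadOp_std (p q : Idx k) :
    quadOp (Matrix.single p q (1:ℂ)) = cgen p * cgen q := by
  unfold quadOp
  rw [Finset.sum_eq_single p]
  · rw [Finset.sum_eq_single q]
    · rw [Matrix.single_apply_same, one_smul]
    · intro b _ hb
      rw [Matrix.single_apply_of_col_ne p p (Ne.symm hb), zero_smul]
    · intro h; exact absurd (Finset.mem_univ q) h
  · intro a _ ha
    refine Finset.sum_eq_zero fun b _ => ?_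
    rw [Matrix.single_apply_of_row_ne (Ne.symm ha), zero_smul]
  · intro h; exact absurd (Finset.mem_univ p) h

lemma stdBasis_transpose (p q : Idx k) :
    (Matrix.single p q (1:ℂ))ᵀ = Matrix.single q p 1 := by
  ext a b
  simp only [Matrix.transpose_apply, Matrix.single, Matrix.of_apply]
  by_cases h1 : p = b <;> by_cases h2 : q = a <;> simp [h1, h2, and_comm]

lemma dgen_in_range (p q : Idx k) : ∃ A : typeDk k, PhiHom k A = dgen p q := by
  set D : Matrix (Idx k) (Idx k) ℂ :=
    Matrix.single p q 1 - Matrix.single q p 1 with hD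
  have hDT : Dᵀ = -D := by
    rw [hD, Matrix.transpose_sub, stdBasis_transpose, stdBasis_transpose, neg_sub]
  have hmem : Jmat k * D ∈ typeDk k := by
    rw [mem_typeDk_iff, Matrix.transpose_mul, Jmat_transpose, hDT, Matrix.neg_mul,
      Matrix.neg_mul, Matrix.mul_neg]
    congr 1
    rw [Matrix.mul_assoc, Jmat_sq, Matrix.mul_one, ← Matrix.mul_assoc, Jmat_sq,
      Matrix.one_mul]
  refine ⟨⟨Jmat k * D, hmem⟩, ?_⟩
  rw [PhiHom_apply]
  show (2⁻¹ : ℂ) • quadOp (Jmat k * (Jmat k * D)) = dgen p q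
  rw [← Matrix.mul_assoc, Jmat_sq, Matrix.one_mul, hD, quadOp_sub, quadOp_std, quadOp_std]
  have hqp : cgen q * cgen p = Jmat k p q • 1 - cgen p * cgen q := by
    rw [eq_sub_iff_add_eq, add_comm]
    exact acar p q
  rw [hqp]
  unfold dgen
  module

lemma range_eq_span (k : ℕ) :
    (LieHom.range (PhiHom k)).toSubmodule = Submodule.span ℂ (soOps k) := by
  apply le_antisymm
  · intro x hx
    rw [LieSubalgebra.mem_toSubmodule, LieHom.mem_range] at hx
    obtain ⟨A, rfl⟩ := hx
    rw [PhiHom_apply]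
    exact Submodule.smul_mem _ _ (quadOp_mem (skew_JA A.2))
  · rw [Submodule.span_le]
    intro T hT
    have key : ∀ p q : Idx k, T = dgen p q →
        T ∈ ((LieHom.range (PhiHom k)).toSubmodule : Set (Module.End ℂ (Fock k))) := by
      intro p q hpq
      obtain ⟨A, hA⟩ := dgen_in_range p q
      rw [hpq]
      exact ⟨A, hA⟩
    rcases hT with ⟨i, j, rfl⟩ | ⟨i, j, rfl⟩ | ⟨i, j, rfl⟩
    · refine key (Sum.inl i) (Sum.inl j) ?_
      unfold dgen
      rw [Jmat_ll]
      simp [cgen]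
    · refine key (Sum.inr i) (Sum.inr j) ?_
      unfold dgen
      rw [Jmat_rr]
      simp [cgen]
    · refine key (Sum.inl i) (Sum.inr j) ?_
      unfold dgen
      rw [Jmat_lr]
      by_cases h : i = j
      · rw [if_pos h, if_pos h]
        simp [cgen]
        try norm_num
      · rw [if_neg h, if_neg h]
        simp [cgen]

end Phi

section Inj
variable {k : ℕ}

lemma sgn_singleton (i : Fin k) : sgn i ({i} : Finset (Fin k)) = 1 := by
  unfold sgn
  rw [Finset.filter_singleton, if_neg (lt_irrefl i), Finset.card_empty, pow_zero]

lemma sgn_empty (i : Fin k) : sgn i (∅ : Finset (Fin k)) = 1 := by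
  unfold sgn
  simp

lemma cgen_inl_vac (i : Fin k) : cgen (Sum.inl i) (vac k) = deltaF {i} := by
  show wedgeOp i (vac k) = deltaF {i}
  rw [vac_eq_deltaF, wedge_deltaF_not_mem (Finset.notMem_empty i)]
  rw [sgn_empty, one_smul]
  rfl

lemma cgen_inr_vac (i : Fin k) : cgen (Sum.inr i) (vac k) = 0 := by
  show contrOp i (vac k) = 0
  rw [vac_eq_deltaF, contr_deltaF_not_mem (Finset.notMem_empty i)]

lemma cgen_inl_top (i : Fin k) : cgen (Sum.inl i) (deltaF Finset.univ) = 0 := by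
  show wedgeOp i (deltaF Finset.univ) = 0
  rw [wedge_deltaF_mem (Finset.mem_univ i)]

lemma cgen_inr_top (i : Fin k) :
    cgen (Sum.inr i) (deltaF Finset.univ) = sgn i Finset.univ • deltaF (Finset.univ.erase i) := by
  show contrOp i (deltaF Finset.univ) = _
  rw [contr_deltaF_mem (Finset.mem_univ i)]

lemma erase_univ_inj {i j : Fin k} (h : Finset.univ.erase i = Finset.univ.erase j) : i = j := by
  by_contra hne
  have : i ∈ Finset.univ.erase j := Finset.mem_erase.2 ⟨hne, Finset.mem_univ i⟩
  rw [← h] at this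
  exact Finset.notMem_erase i Finset.univ this

lemma cgen_indep (x : Idx k → ℂ) (h : (∑ p, x p • cgen p) = 0) : ∀ p, x p = 0 := by
  have hvac : ∀ S : Finset (Fin k), ((∑ p, x p • cgen p) (vac k)) S = 0 := by
    intro S; rw [h]; rfl
  have htop : ∀ S : Finset (Fin k), ((∑ p, x p • cgen p) (deltaF Finset.univ)) S = 0 := by
    intro S; rw [h]; rfl
  intro p
  rcases p with i | i
  · have := hvac {i}
    rw [LinearMap.sum_apply] at this
    rw [Finset.sum_apply] at this
    rw [Fintype.sum_sum_type] at this
    simp only [LinearMap.smul_apply, Pi.smul_apply, smul_eq_mul] at this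
    simp only [cgen_inl_vac, cgen_inr_vac, Pi.zero_apply, mul_zero,
      Finset.sum_const_zero, add_zero, deltaF] at this
    rw [Finset.sum_eq_single i] at this
    · simpa using this
    · intro j _ hj
      rw [if_neg (by simp [Finset.singleton_inj, Ne.symm hj])]
      ring
    · intro hmem; exact absurd (Finset.mem_univ i) hmem
  · have := htop (Finset.univ.erase i)
    rw [LinearMap.sum_apply, Finset.sum_apply, Fintype.sum_sum_type] at this
    simp only [LinearMap.smul_apply, Pi.smul_apply, smul_eq_mul] at this
    simp only [cgen_inl_top, cgen_inr_top, Pi.zero_apply, mul_zero,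
      Finset.sum_const_zero, zero_add, Pi.smul_apply, deltaF, smul_eq_mul] at this
    rw [Finset.sum_eq_single i] at this
    · rw [if_pos rfl, mul_one] at this
      rcases mul_eq_zero.1 this with h' | h'
      · exact h'
      · exact absurd h' (sgn_ne_zero i Finset.univ)
    · intro j _ hj
      rw [if_neg (fun hEq => hj (erase_univ_inj hEq).symm)]
      ring
    · intro hmem; exact absurd (Finset.mem_univ i) hmem

lemma matrix_eq_zero_of_cols {M : Matrix (Idx k) (Idx k) ℂ}
    (h : ∀ r p, M p r = 0) : M = 0 := by
  ext p r; exact h r p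

lemma PhiHom_injective : Function.Injective (PhiHom k) := by
  intro A B hAB
  have hsub : PhiHom k (A - B) = 0 := by
    rw [map_sub, hAB, sub_self]
  set C := A - B with hC
  have hval : (C : Matrix (Idx k) (Idx k) ℂ) = 0 := by
    have hq : quadOp (Jmat k * C.val) = 0 := by
      have h1 : (2⁻¹ : ℂ) • quadOp (Jmat k * C.val) = 0 := hsub
      have := congrArg (fun X => (2:ℂ) • X) h1
      simpa [smul_smul] using this
    have hskew : (Jmat k * C.val)ᵀ = -(Jmat k * C.val) := skew_JA C.2
    have hcols : ∀ r p : Idx k, ((Jmat k * C.val) * Jmat k) p r = 0 := by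
      intro r p
      have hcomm := quad_comm_c hskew r
      rw [hq, zero_mul, mul_zero, sub_zero] at hcomm
      have hall := cgen_indep _ hcomm.symm p
      have h2 : (2:ℂ) ≠ 0 := two_ne_zero
      exact (mul_eq_zero.1 hall).resolve_left h2
    have hJCJ : (Jmat k * C.val) * Jmat k = 0 := matrix_eq_zero_of_cols hcols
    have : Jmat k * C.val = 0 := by
      have := congrArg (fun X => X * Jmat k) hJCJ
      simpa [Matrix.mul_assoc, Jmat_sq, Matrix.zero_mul] using this
    have := congrArg (fun X => Jmat k * X) this
    simpa [← Matrix.mul_assoc, Jmat_sq, Matrix.mul_zero] using this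
  have : C = 0 := by
    exact Subtype.ext hval
  have := sub_eq_zero.1 (by rw [← hC]; exact_mod_cast this)
  exact this

end Inj

section SoDim

variable {n : ℕ}

/-- index type for the skew-symmetric basis -/
abbrev SkIdx (n : ℕ) := {p : Fin n × Fin n // p.1 < p.2}

def skV (p : SkIdx n) : Matrix (Fin n) (Fin n) ℂ :=
  Matrix.single p.1.1 p.1.2 1 - Matrix.single p.1.2 p.1.1 1

lemma stdBasis_transpose' (p q : Fin n) :
    (Matrix.single p q (1:ℂ))ᵀ = Matrix.single q p 1 := by
  ext a b
  simp only [Matrix.transpose_apply, Matrix.single, Matrix.of_apply]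
  by_cases h1 : p = b <;> by_cases h2 : q = a <;> simp [h1, h2, and_comm]

lemma skV_mem (p : SkIdx n) : skV p ∈ LieAlgebra.Orthogonal.so (Fin n) ℂ := by
  rw [LieAlgebra.Orthogonal.mem_so]
  rw [skV, Matrix.transpose_sub, stdBasis_transpose', stdBasis_transpose', neg_sub]

def skB (p : SkIdx n) : ↥(LieAlgebra.Orthogonal.so (Fin n) ℂ) := ⟨skV p, skV_mem p⟩

lemma skV_entry (g : SkIdx n → ℂ) (i j : Fin n) :
    (∑ p : SkIdx n, g p • skV p) i j
      = (if h : i < j then g ⟨(i,j),h⟩ else 0) - (if h : j < i then g ⟨(j,i),h⟩ else 0) := by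
  rw [Matrix.sum_apply]
  have hterm : ∀ p : SkIdx n, (g p • skV p) i j
      = (if p.1.1 = i ∧ p.1.2 = j then g p else 0)
        - (if p.1.2 = i ∧ p.1.1 = j then g p else 0) := by
    intro p
    rw [Matrix.smul_apply, skV, Matrix.sub_apply, smul_eq_mul]
    simp only [Matrix.single, Matrix.of_apply]
    by_cases h1 : p.1.1 = i ∧ p.1.2 = j <;> by_cases h2 : p.1.2 = i ∧ p.1.1 = j <;>
      simp [h1, h2] <;> (try (split <;> ring)) <;> (try ring)
  rw [Finset.sum_congr rfl fun p _ => hterm p, Finset.sum_sub_distrib]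
  congr 1
  · by_cases h : i < j
    · rw [dif_pos h, Finset.sum_eq_single (⟨(i,j),h⟩ : SkIdx n)]
      · rw [if_pos ⟨rfl, rfl⟩]
      · intro p _ hp
        rw [if_neg]
        intro ⟨h1, h2⟩
        exact hp (Subtype.ext (Prod.ext h1 h2))
      · intro hmem; exact absurd (Finset.mem_univ _) hmem
    · rw [dif_neg h]
      refine Finset.sum_eq_zero fun p _ => ?_
      rw [if_neg]
      intro ⟨h1, h2⟩
      exact h (h1 ▸ h2 ▸ p.2)
  · by_cases h : j < i
    · rw [dif_pos h, Finset.sum_eq_single (⟨(j,i),h⟩ : SkIdx n)]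
      · rw [if_pos ⟨rfl, rfl⟩]
      · intro p _ hp
        rw [if_neg]
        intro ⟨h1, h2⟩
        exact hp (Subtype.ext (Prod.ext h2 h1))
      · intro hmem; exact absurd (Finset.mem_univ _) hmem
    · rw [dif_neg h]
      refine Finset.sum_eq_zero fun p _ => ?_
      rw [if_neg]
      intro ⟨h1, h2⟩
      exact h (h2 ▸ h1 ▸ p.2)

lemma skB_indep : LinearIndependent ℂ (skB (n := n)) := by
  rw [Fintype.linearIndependent_iff]
  intro g hg p
  have hcoe : (∑ q : SkIdx n, g q • skV q) = 0 := by
    have := congrArg (Subtype.val) hg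
    rw [AddSubmonoidClass.coe_finset_sum] at this
    simpa [skB] using this
  have := congrFun (congrFun (hcoe) p.1.1) p.1.2
  rw [Matrix.zero_apply] at this
  rw [skV_entry, dif_pos p.2, dif_neg (asymm p.2), sub_zero] at this
  simpa using this

lemma skB_span : ⊤ ≤ Submodule.span ℂ (Set.range (skB (n := n))) := by
  intro x _
  have hskew : (x.val)ᵀ = -(x.val) := (LieAlgebra.Orthogonal.mem_so _ _ _).1 x.2
  have hentry : ∀ i j : Fin n, x.val i j = - x.val j i := by
    intro i j
    have := congrFun (congrFun hskew j) i
    simpa [Matrix.transpose_apply] using this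
  have hx : x.val = ∑ p : SkIdx n, x.val p.1.1 p.1.2 • skV p := by
    ext i j
    rw [skV_entry]
    rcases lt_trichotomy i j with h | h | h
    · rw [dif_pos h, dif_neg (asymm h), sub_zero]
    · subst h
      rw [dif_neg (lt_irrefl i), sub_zero]
      have := hentry i i
      have h2 : (2:ℂ) * x.val i i = 0 := by rw [two_mul]; nth_rewrite 2 [this]; ring
      exact (mul_eq_zero.1 h2).resolve_left two_ne_zero
    · rw [dif_neg (asymm h), dif_pos h, zero_sub]
      exact hentry i j
  have hxs : x = ∑ p : SkIdx n, x.val p.1.1 p.1.2 • skB p := by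
    apply Subtype.ext
    rw [AddSubmonoidClass.coe_finset_sum]
    simpa [skB] using hx
  rw [hxs]
  exact Submodule.sum_mem _ fun p _ =>
    Submodule.smul_mem _ _ (Submodule.subset_span ⟨p, rfl⟩)

noncomputable def skBasis : Module.Basis (SkIdx n) ℂ ↥(LieAlgebra.Orthogonal.so (Fin n) ℂ) :=
  Module.Basis.mk skB_indep skB_span

def skIdxEquiv : (Σ j : Fin n, Fin j.1) ≃ SkIdx n where
  toFun x := ⟨(⟨x.2.1, lt_trans x.2.2 x.1.2⟩, x.1), x.2.2⟩
  invFun p := ⟨p.1.2, ⟨p.1.1.1, p.2⟩⟩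
  left_inv x := rfl
  right_inv p := rfl

lemma card_skIdx : Fintype.card (SkIdx n) = n * (n - 1) / 2 := by
  rw [← Fintype.card_congr (skIdxEquiv (n := n)), Fintype.card_sigma]
  simp only [Fintype.card_fin]
  rw [Fin.sum_univ_eq_sum_range (fun i => i) n, Finset.sum_range_id]

lemma finrank_so (n : ℕ) :
    Module.finrank ℂ ↥(LieAlgebra.Orthogonal.so (Fin n) ℂ) = n * (n - 1) / 2 := by
  rw [Module.finrank_eq_card_basis (skBasis (n := n)), card_skIdx]

end SoDim

section IsoChain
variable (k : ℕ)

noncomputable def reindexSo :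
    (LieAlgebra.Orthogonal.so (Fin k ⊕ Fin k) ℂ) ≃ₗ⁅ℂ⁆
      (LieAlgebra.Orthogonal.so (Fin (2*k)) ℂ) := by
  have e0 : (Fin k ⊕ Fin k) ≃ Fin (2*k) :=
    finSumFinEquiv.trans (finCongr (two_mul k).symm)
  have htr : ∀ A : Matrix (Fin k ⊕ Fin k) (Fin k ⊕ Fin k) ℂ,
      ((Matrix.reindexAlgEquiv ℂ ℂ e0) A)ᵀ = (Matrix.reindexAlgEquiv ℂ ℂ e0) Aᵀ := by
    intro A
    simp [Matrix.reindexAlgEquiv_apply, Matrix.reindex_apply, Matrix.transpose_submatrix]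
  refine (skewAdjointMatricesLieSubalgebraEquivTranspose
    (1 : Matrix (Fin k ⊕ Fin k) (Fin k ⊕ Fin k) ℂ)
    (Matrix.reindexAlgEquiv ℂ ℂ e0) htr).trans (LieEquiv.ofEq _ _ ?_)
  rw [show (Matrix.reindexAlgEquiv ℂ ℂ e0) 1 = 1 from _root_.map_one _]
  rfl

noncomputable def typeDkEquivSo :
    ↥(typeDk k) ≃ₗ⁅ℂ⁆ ↥(LieAlgebra.Orthogonal.so (Fin (2*k)) ℂ) := by
  letI : Invertible (2 : ℂ) := invertibleOfNonzero two_ne_zero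
  exact (LieAlgebra.Orthogonal.typeDEquivSo' (Fin k) ℂ).trans
    ((LieAlgebra.Orthogonal.soIndefiniteEquiv (Fin k) (Fin k) ℂ Complex.I_mul_I).trans
      (reindexSo k))

end IsoChain

section Invariance
variable {k : ℕ}

lemma even_sub_mem_iff (f : Fock k) : f ∈ evenSub k ↔ ∀ S : Finset (Fin k), ¬ Even S.card → f S = 0 :=
  Iff.rfl

lemma ww_even {i j : Fin k} {f : Fock k} (hf : f ∈ evenSub k) :
    (wedgeOp i * wedgeOp j) f ∈ evenSub k := by
  intro S hS
  rw [Module.End.mul_apply, wedge_apply]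
  by_cases hi : i ∈ S
  · rw [wedge_apply]
    by_cases hj : j ∈ S.erase i
    · rw [if_pos hi, if_pos hj]
      have hj' : j ∈ S := Finset.mem_of_mem_erase hj
      have hij : j ≠ i := (Finset.mem_erase.1 hj).1
      have hc2 : 2 ≤ S.card := Finset.one_lt_card.2 ⟨i, hi, j, hj', Ne.symm hij⟩
      have hcard : ((S.erase i).erase j).card = S.card - 2 := by
        rw [Finset.card_erase_of_mem hj, Finset.card_erase_of_mem hi]
        omega
      have : ¬ Even (((S.erase i).erase j).card) := by
        rw [hcard]
        rw [Nat.even_iff] at hS ⊢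
        omega
      rw [hf _ this, mul_zero, mul_zero]
    · rw [if_neg hj, zero_mul, mul_zero]
  · rw [if_neg hi, zero_mul]

lemma cc_even {i j : Fin k} {f : Fock k} (hf : f ∈ evenSub k) :
    (contrOp i * contrOp j) f ∈ evenSub k := by
  intro S hS
  rw [Module.End.mul_apply, contr_apply]
  by_cases hi : i ∈ S
  · rw [if_pos hi, zero_mul]
  · rw [if_neg hi, contr_apply]
    by_cases hj : j ∈ insert i S
    · rw [if_pos hj, zero_mul, mul_zero]
    · rw [if_neg hj]
      have hcard : (insert j (insert i S)).card = S.card + 2 := by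
        rw [Finset.card_insert_of_notMem hj, Finset.card_insert_of_notMem hi]
      have : ¬ Even ((insert j (insert i S)).card) := by
        rw [hcard]
        rw [Nat.even_iff] at hS ⊢
        omega
      rw [hf _ this, mul_zero, mul_zero]

lemma wc_even {i j : Fin k} {f : Fock k} (hf : f ∈ evenSub k) :
    (wedgeOp i * contrOp j) f ∈ evenSub k := by
  intro S hS
  rw [Module.End.mul_apply, wedge_apply]
  by_cases hi : i ∈ S
  · rw [if_pos hi, contr_apply]
    by_cases hj : j ∈ S.erase i
    · rw [if_pos hj, zero_mul, mul_zero]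
    · rw [if_neg hj]
      have hcard : (insert j (S.erase i)).card = S.card := by
        rw [Finset.card_insert_of_notMem hj, Finset.card_erase_of_mem hi]
        have : 1 ≤ S.card := Finset.card_pos.2 ⟨i, hi⟩
        omega
      have : ¬ Even ((insert j (S.erase i)).card) := by rw [hcard]; exact hS
      rw [hf _ this, mul_zero, mul_zero]
  · rw [if_neg hi, zero_mul]

lemma span_even_invariant {T : Module.End ℂ (Fock k)}
    (hT : T ∈ Submodule.span ℂ (soOps k)) :
    ∀ f ∈ evenSub k, T f ∈ evenSub k := by
  induction hT using Submodule.span_induction with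
  | mem T hT =>
      rcases hT with ⟨i, j, rfl⟩ | ⟨i, j, rfl⟩ | ⟨i, j, rfl⟩
      · exact fun f hf => ww_even hf
      · exact fun f hf => cc_even hf
      · intro f hf
        rw [LinearMap.sub_apply]
        refine Submodule.sub_mem _ (wc_even hf) ?_
        by_cases h : i = j
        · rw [if_pos h, LinearMap.smul_apply, Module.End.one_apply]
          exact Submodule.smul_mem _ _ hf
        · rw [if_neg h, LinearMap.zero_apply]
          exact Submodule.zero_mem _
  | zero => intro f _; rw [LinearMap.zero_apply]; exact Submodule.zero_mem _
  | add T₁ T₂ _ _ h1 h2 =>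
      intro f hf
      rw [LinearMap.add_apply]
      exact Submodule.add_mem _ (h1 f hf) (h2 f hf)
  | smul c T _ hT =>
      intro f hf
      rw [LinearMap.smul_apply]
      exact Submodule.smul_mem _ _ (hT f hf)

end Invariance

section Irred
variable {k : ℕ}

lemma q_apply {i j : Fin k} (hij : i ≠ j) (f : Fock k) (T : Finset (Fin k)) :
    (contrOp i * contrOp j) ((wedgeOp j * wedgeOp i) f) T
      = if i ∈ T ∨ j ∈ T then 0 else f T := by
  rw [Module.End.mul_apply, Module.End.mul_apply, contr_apply]
  by_cases hi : i ∈ T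
  · rw [if_pos hi, if_pos (Or.inl hi), zero_mul]
  · rw [if_neg hi, contr_apply]
    by_cases hj : j ∈ T
    · rw [if_pos (Finset.mem_insert_of_mem hj), if_pos (Or.inr hj), zero_mul, mul_zero]
    · have hjT1 : j ∉ insert i T := by
        simp [Finset.mem_insert, hj, Ne.symm hij]
      rw [if_neg hjT1, if_neg (by tauto : ¬ (i ∈ T ∨ j ∈ T))]
      rw [wedge_apply, if_pos (Finset.mem_insert_self j (insert i T)),
        Finset.erase_insert hjT1, wedge_apply, if_pos (Finset.mem_insert_self i T),
        Finset.erase_insert hi]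
      rw [sgn_insert_self j (insert i T), sgn_insert_self i T]
      have h1 := sgn_sq i T
      have h2 := sgn_sq j (insert i T)
      linear_combination (sgn j (insert i T) * sgn j (insert i T) * f T) * h1 + f T * h2

lemma proj_vac {U : Submodule ℂ (Fock k)} (hk : 2 ≤ k)
    (hUinv : ∀ T ∈ Submodule.span ℂ (soOps k), ∀ u ∈ U, T u ∈ U)
    {g : Fock k} (hg : g ∈ U) (hg0 : g ∅ ≠ 0) : vac k ∈ U := by
  have main : ∀ m : ℕ, m ≤ k → ∃ h, h ∈ U ∧ h ∅ = g ∅ ∧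
      (∀ T : Finset (Fin k), (∃ a : Fin k, a ∈ T ∧ a.val < m) → h T = 0) := by
    intro m
    induction m with
    | zero => exact fun _ => ⟨g, hg, rfl, by rintro T ⟨a, _, ha⟩; omega⟩
    | succ m ih =>
        intro hmk
        obtain ⟨h, hU, h0, hz⟩ := ih (by omega)
        set i : Fin k := ⟨m, by omega⟩ with hi
        set j : Fin k := if m = 0 then (⟨1, by omega⟩ : Fin k) else ⟨0, by omega⟩ with hj
        have hij : i ≠ j := by
          rcases Nat.eq_zero_or_pos m with h' | h'
          · rw [hj, if_pos h']
            intro hEq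
            have := congrArg Fin.val hEq
            simp [hi, h'] at this
          · rw [hj, if_neg (by omega)]
            intro hEq
            have := congrArg Fin.val hEq
            simp [hi] at this
            omega
        set h' := (contrOp i * contrOp j) ((wedgeOp j * wedgeOp i) h) with hh'
        have hU' : h' ∈ U := by
          refine hUinv _ ?_ _ (hUinv _ ?_ _ hU)
          · exact Submodule.subset_span (Or.inr (Or.inl ⟨i, j, rfl⟩))
          · exact Submodule.subset_span (Or.inl ⟨j, i, rfl⟩)
        refine ⟨h', hU', ?_, ?_⟩
        · rw [hh', q_apply hij, if_neg (by simp), h0]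
        · rintro T ⟨a, haT, ham⟩
          rw [hh', q_apply hij]
          by_cases hmem : i ∈ T ∨ j ∈ T
          · rw [if_pos hmem]
          · rw [if_neg hmem]
            refine hz T ⟨a, haT, ?_⟩
            have : a ≠ i := fun hEq => hmem (Or.inl (hEq ▸ haT))
            have : a.val ≠ m := fun hEq => this (Fin.ext (by simp [hi, hEq]))
            omega
  obtain ⟨h, hU, h0, hz⟩ := main k le_rfl
  have hrep : h = (g ∅) • vac k := by
    funext T
    by_cases hT : T = ∅
    · subst hT
      rw [h0]
      simp [vac]
    · obtain ⟨a, ha⟩ := Finset.nonempty_iff_ne_empty.2 hT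
      rw [hz T ⟨a, ha, a.2⟩]
      simp [vac, hT]
  have : (g ∅)⁻¹ • h ∈ U := Submodule.smul_mem _ _ hU
  rwa [hrep, smul_smul, inv_mul_cancel₀ hg0, one_smul] at this

lemma reach_vac {U : Submodule ℂ (Fock k)} (hk : 2 ≤ k) (hUle : U ≤ evenSub k)
    (hUinv : ∀ T ∈ Submodule.span ℂ (soOps k), ∀ u ∈ U, T u ∈ U) :
    ∀ n : ℕ, ∀ f ∈ U, ∀ S : Finset (Fin k), f S ≠ 0 → S.card = n → vac k ∈ U := by
  intro n
  induction n using Nat.strong_induction_on with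
  | _ n ih =>
      intro f hfU S hfS hcard
      by_cases hS : S = ∅
      · exact proj_vac hk hUinv hfU (hS ▸ hfS)
      · have heven : Even S.card := by
          by_contra hodd
          exact hfS (hUle hfU S hodd)
        have h1 : 1 ≤ S.card := Finset.card_pos.2 (Finset.nonempty_iff_ne_empty.2 hS)
        have h2 : 2 ≤ S.card := by
          rw [Nat.even_iff] at heven; omega
        obtain ⟨i, hi⟩ := Finset.nonempty_iff_ne_empty.2 hS
        have hcard_erase : 1 ≤ (S.erase i).card := by
          rw [Finset.card_erase_of_mem hi]; omega
        obtain ⟨j, hj⟩ : (S.erase i).Nonempty :=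
          Finset.card_pos.1 (by omega : 0 < (S.erase i).card)
        have hjS : j ∈ S := Finset.mem_of_mem_erase hj
        have hji : j ≠ i := (Finset.mem_erase.1 hj).1
        set g := (contrOp i * contrOp j) f with hg
        have hgU : g ∈ U :=
          hUinv _ (Submodule.subset_span (Or.inr (Or.inl ⟨i, j, rfl⟩))) _ hfU
        set T := (S.erase i).erase j with hT
        have hiT : i ∉ T := fun h => Finset.notMem_erase i S (Finset.mem_of_mem_erase h)
        have hjT1 : j ∉ insert i T := by
          rw [Finset.mem_insert]
          rintro (h | h)
          · exact hji h
          · exact Finset.notMem_erase j (S.erase i) h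
        have hins : insert j (insert i T) = S := by
          rw [hT, Finset.erase_right_comm, Finset.insert_erase
            (Finset.mem_erase.2 ⟨Ne.symm hji, hi⟩), Finset.insert_erase hjS]
        have hgT : g T ≠ 0 := by
          rw [hg, Module.End.mul_apply, contr_apply, if_neg hiT, contr_apply, if_neg hjT1,
            hins]
          exact mul_ne_zero (sgn_ne_zero i T) (mul_ne_zero (sgn_ne_zero j _) hfS)
        have hTcard : T.card = n - 2 := by
          rw [hT, Finset.card_erase_of_mem hj, Finset.card_erase_of_mem hi, hcard]
          omega
        exact ih (n - 2) (by omega) g hgU T hgT hTcard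

lemma delta_mem {U : Submodule ℂ (Fock k)}
    (hUinv : ∀ T ∈ Submodule.span ℂ (soOps k), ∀ u ∈ U, T u ∈ U)
    (hvac : vac k ∈ U) :
    ∀ n : ℕ, ∀ S : Finset (Fin k), Even S.card → S.card = n → deltaF S ∈ U := by
  intro n
  induction n using Nat.strong_induction_on with
  | _ n ih =>
      intro S heven hcard
      by_cases hS : S = ∅
      · rw [hS, ← vac_eq_deltaF]; exact hvac
      · have h1 : 1 ≤ S.card := Finset.card_pos.2 (Finset.nonempty_iff_ne_empty.2 hS)
        have h2 : 2 ≤ S.card := by rw [Nat.even_iff] at heven; omega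
        obtain ⟨i, hi⟩ := Finset.nonempty_iff_ne_empty.2 hS
        obtain ⟨j, hj⟩ := Finset.card_pos.1
          (by rw [Finset.card_erase_of_mem hi]; omega : 0 < (S.erase i).card)
        have hjS : j ∈ S := Finset.mem_of_mem_erase hj
        have hji : j ≠ i := (Finset.mem_erase.1 hj).1
        set T := (S.erase i).erase j with hT
        have hTeven : Even T.card := by
          rw [hT, Finset.card_erase_of_mem hj, Finset.card_erase_of_mem hi]
          rw [Nat.even_iff] at heven ⊢
          omega
        have hTcard : T.card = n - 2 := by
          rw [hT, Finset.card_erase_of_mem hj, Finset.card_erase_of_mem hi, hcard]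
          omega
        have hdT : deltaF T ∈ U := ih (n-2) (by omega) T hTeven hTcard
        have hjT : j ∉ T := Finset.notMem_erase j _
        have hins_j : insert j T = S.erase i := Finset.insert_erase hj
        have hiT1 : i ∉ insert j T := by
          rw [hins_j]; exact Finset.notMem_erase i S
        have hins_i : insert i (insert j T) = S := by
          rw [hins_j, Finset.insert_erase hi]
        have happ : (wedgeOp i * wedgeOp j) (deltaF T)
            = (sgn j T * sgn i (insert j T)) • deltaF S := by
          rw [Module.End.mul_apply, wedge_deltaF_not_mem hjT, LinearMap.map_smul,
            wedge_deltaF_not_mem hiT1, hins_i, smul_smul]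
        have hmem : (wedgeOp i * wedgeOp j) (deltaF T) ∈ U :=
          hUinv _ (Submodule.subset_span (Or.inl ⟨i, j, rfl⟩)) _ hdT
        rw [happ] at hmem
        have hc : (sgn j T * sgn i (insert j T)) ≠ 0 :=
          mul_ne_zero (sgn_ne_zero _ _) (sgn_ne_zero _ _)
        have := Submodule.smul_mem U (sgn j T * sgn i (insert j T))⁻¹ hmem
        rwa [smul_smul, inv_mul_cancel₀ hc, one_smul] at this

lemma irreducible_even (hk : 2 ≤ k) :
    ∀ U : Submodule ℂ (Fock k), U ≤ evenSub k →
      (∀ T ∈ Submodule.span ℂ (soOps k), ∀ u ∈ U, T u ∈ U) →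
      U = ⊥ ∨ U = evenSub k := by
  intro U hUle hUinv
  by_cases hbot : U = ⊥
  · exact Or.inl hbot
  right
  obtain ⟨f, hfU, hf0⟩ : ∃ f, f ∈ U ∧ f ≠ 0 := by
    by_contra hcon
    push_neg at hcon
    exact hbot ((Submodule.eq_bot_iff U).2 hcon)
  obtain ⟨S₀, hS₀⟩ : ∃ S, f S ≠ 0 := by
    by_contra hcon
    push_neg at hcon
    exact hf0 (funext hcon)
  have hvac : vac k ∈ U := reach_vac hk hUle hUinv S₀.card f hfU S₀ hS₀ rfl
  apply le_antisymm hUle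
  intro f' hf'
  have hrep : f' = ∑ S : Finset (Fin k), f' S • deltaF S := by
    funext T
    rw [Finset.sum_apply]
    simp only [Pi.smul_apply, deltaF, smul_eq_mul, mul_ite, mul_one, mul_zero]
    rw [Finset.sum_ite_eq Finset.univ T f']
    simp
  rw [hrep]
  refine Submodule.sum_mem _ fun S _ => ?_
  by_cases hev : Even S.card
  · exact Submodule.smul_mem _ _ (delta_mem hUinv hvac S.card S hev rfl)
  · rw [hf' S hev, zero_smul]
    exact Submodule.zero_mem _

end Irred

section Part3
variable {k : ℕ}

lemma contr_vac (i : Fin k) : contrOp i (vac k) = 0 := by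
  rw [vac_eq_deltaF, contr_deltaF_not_mem (Finset.notMem_empty i)]

lemma sgn_eq_one_of {i : Fin k} {S : Finset (Fin k)} (h : ∀ j ∈ S, ¬ j < i) :
    sgn i S = 1 := by
  unfold sgn
  rw [Finset.filter_eq_empty_iff.2 h, Finset.card_empty, pow_zero]

end Part3

/-- (1) the span L of {a_i a_j, a_i^* a_j^*, a_i a_j^* − ½δ_{ij}} is a Lie
subalgebra of End(Λ^•ℂ^k) of dimension 2k² − k isomorphic to so(2k,ℂ);
(2) Λ^{even}(ℂ^k) is L-invariant and an irreducible L-module;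
(3) the vacuum 1 ∈ Λ⁰ is killed by the raising operators X_i^+ and satisfies
H_i(1) = 0 for i < k and H_k(1) = 1, i.e. it is a highest weight vector of the k-th
fundamental weight. (Indices here are 0-based: i ranges over 0,…,k−2 for the first
k−1 root vectors, and the last ones use k−2, k−1.) -/
theorem statement_10 (k : ℕ) (hk : 2 ≤ k) :
    -- (1)
    (∃ S : LieSubalgebra ℂ (Module.End ℂ (Fock k)),
      S.toSubmodule = Submodule.span ℂ (soOps k) ∧
      Module.finrank ℂ S = 2*k^2 - k ∧
      Nonempty (S ≃ₗ⁅ℂ⁆ (LieAlgebra.Orthogonal.so (Fin (2*k)) ℂ))) ∧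
    -- (2)
    (∀ T ∈ Submodule.span ℂ (soOps k), ∀ f ∈ evenSub k, T f ∈ evenSub k) ∧
    (∀ U : Submodule ℂ (Fock k), U ≤ evenSub k →
      (∀ T ∈ Submodule.span ℂ (soOps k), ∀ u ∈ U, T u ∈ U) →
      U = ⊥ ∨ U = evenSub k) ∧
    -- (3)
    (∀ i : ℕ, ∀ h : i + 1 < k,
      (wedgeOp (⟨i+1, h⟩ : Fin k) * contrOp (⟨i, by omega⟩ : Fin k)) (vac k) = 0 ∧
      ⁅wedgeOp (⟨i+1, h⟩ : Fin k) * contrOp (⟨i, by omega⟩ : Fin k),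
        wedgeOp (⟨i, by omega⟩ : Fin k) * contrOp (⟨i+1, h⟩ : Fin k)⁆ (vac k) = 0) ∧
    (contrOp (⟨k-1, by omega⟩ : Fin k) * contrOp (⟨k-2, by omega⟩ : Fin k)) (vac k) = 0 ∧
    ⁅contrOp (⟨k-1, by omega⟩ : Fin k) * contrOp (⟨k-2, by omega⟩ : Fin k),
      wedgeOp (⟨k-2, by omega⟩ : Fin k) * wedgeOp (⟨k-1, by omega⟩ : Fin k)⁆ (vac k)
      = vac k := by
  refine ⟨?_, ?_, ?_, ?_, ?_, ?_⟩
  · -- part 1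
    have eqv : ↥((PhiHom k).range) ≃ₗ⁅ℂ⁆ ↥(LieAlgebra.Orthogonal.so (Fin (2*k)) ℂ) :=
      (LieEquiv.ofInjective (PhiHom k) PhiHom_injective).symm.trans (typeDkEquivSo k)
    refine ⟨(PhiHom k).range, range_eq_span k, ?_, ⟨eqv⟩⟩
    rw [eqv.toLinearEquiv.finrank_eq, finrank_so (2*k)]
    have hle : k ≤ 2*k^2 := by nlinarith
    have h1 : 2*k*(2*k-1) = 2*(2*k^2-k) := by
      zify [hle, show 1 ≤ 2*k by omega]
      ring
    rw [h1, Nat.mul_div_cancel_left _ (by norm_num : 0 < 2)]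
  · exact fun T hT => span_even_invariant hT
  · exact irreducible_even hk
  · intro i h
    have hX : (wedgeOp (⟨i+1, h⟩ : Fin k) * contrOp (⟨i, by omega⟩ : Fin k)) (vac k) = 0 := by
      rw [Module.End.mul_apply, contr_vac, map_zero]
    have hY : (wedgeOp (⟨i, by omega⟩ : Fin k) * contrOp (⟨i+1, h⟩ : Fin k)) (vac k) = 0 := by
      rw [Module.End.mul_apply, contr_vac, map_zero]
    refine ⟨hX, ?_⟩
    simp only [Ring.lie_def, LinearMap.sub_apply, Module.End.mul_apply, contr_vac,
      map_zero, sub_zero]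
  · rw [Module.End.mul_apply, contr_vac, map_zero]
  · set a : Fin k := ⟨k-1, by omega⟩ with ha
    set b : Fin k := ⟨k-2, by omega⟩ with hb
    have hba : ¬ (a < b) := by
      rw [ha, hb, Fin.lt_def]
      simp only []
      omega
    have hab : a ≠ b := by
      rw [ha, hb]
      intro hEq
      have := congrArg Fin.val hEq
      simp at this
      omega
    have hbna : b ∉ ({a} : Finset (Fin k)) := by
      rw [Finset.mem_singleton]
      exact fun hEq => hab hEq.symm
    have hBvac : wedgeOp b (wedgeOp a (vac k)) = deltaF (insert b {a}) := by
      rw [vac_eq_deltaF,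
        wedge_deltaF_not_mem (Finset.notMem_empty a), sgn_empty, one_smul]
      rw [show insert a (∅ : Finset (Fin k)) = {a} from rfl]
      rw [wedge_deltaF_not_mem hbna,
        sgn_eq_one_of (fun j hj => by rw [Finset.mem_singleton] at hj; subst hj; exact hba),
        one_smul]
    have hfinal : contrOp a (contrOp b (deltaF (insert b {a}))) = vac k := by
      rw [contr_deltaF_mem (Finset.mem_insert_self b {a}),
        sgn_insert_self, Finset.erase_insert hbna, LinearMap.map_smul,
        sgn_eq_one_of (fun j hj => by rw [Finset.mem_singleton] at hj; subst hj; exact hba),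
        one_smul, contr_deltaF_mem (Finset.mem_singleton_self a), sgn_singleton, one_smul,
        Finset.erase_singleton, vac_eq_deltaF]
    simp only [Ring.lie_def, LinearMap.sub_apply, Module.End.mul_apply]
    rw [hBvac, hfinal, contr_vac, map_zero, map_zero, map_zero, sub_zero]

end
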